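/- (Constructive Implicit Function Theorem.) Let P, X, Y be Banach spaces and let G : P × X → Y be Fréchet differentiable. Assume: (H1) there exist (α*, x*) ∈ P × X and ρ > 0 with ‖G(α*, x*)‖_Y ≤ ρ; (H2) D_xG(α*, x*) has a bounded inverse with operator norm ‖D_xG(α*, x*)⁻¹‖ ≤ K for some K > 0; (H3) there exist positive constants L₁, L₂, ℓ_x, ℓ_α such that for all (α, x) with ‖x − x*‖_X ≤ ℓ_x and ‖α − α*‖_P ≤ ℓ_α one has ‖D_xG(α, x) − D_xG(α*, x*)‖ ≤ L₁‖x − x*‖_X + L₂‖α − α*‖_P; (H4) there exist positive constants L₃, L₄ such that for all α with ‖α − α*‖_P ≤ ℓ_α one has ‖D_αG(α, x*)‖ ≤ L₃ + L₄‖α − α*‖_P. If in addition 4K²ρL₁ < 1 and 2Kρ < ℓ_x, then there exists a pair of constants (δ_α, δ_x) with 0 ≤ δ_α ≤ ℓ_α and 0 < δ_x ≤ ℓ_x satisfying 2KL₁δ_x + 2KL₂δ_α ≤ 1 and 2Kρ + 2KL₃δ_α + 2KL₄δ_α² ≤ δ_x, and for every such pair the following holds: for every α ∈ P with ‖α − α*‖_P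 ≤ δ_α there exists a uniquely determined x(α) ∈ X with ‖x(α) − x*‖_X ≤ δ_x such that G(α, x(α)) = 0; in particular, all solutions of G(α, x) = 0 in the set {‖α − α*‖_P ≤ δ_α} × {‖x − x*‖_X ≤ δ_x} lie on the graph of the map α ↦ x(α). -/

import Mathlib

set_option maxHeartbeats 2000000


/-- Constructive Implicit Function Theorem: given Banach spaces
`P, X, Y`, a Fréchet differentiable `G : P × X → Y`, an approximate zero
`(α*, x*)` with residual bound `ρ` (H1), a bounded inverse of the partial
derivative `D_x G(α*,x*)` of norm at most `K` (H2), Lipschitz bounds (H3) for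
`D_x G` and (H4) for `D_α G`, and the smallness conditions `4K²ρL₁ < 1` and
`2Kρ < ℓ_x`, there exists a pair `(δ_α, δ_x)` with `0 ≤ δ_α ≤ ℓ_α`,
`0 < δ_x ≤ ℓ_x`, `2KL₁δ_x + 2KL₂δ_α ≤ 1` and
`2Kρ + 2KL₃δ_α + 2KL₄δ_α² ≤ δ_x`, and for every such pair and every `α` with
`‖α - α*‖ ≤ δ_α` there is a unique `x(α)` with `‖x(α) - x*‖ ≤ δ_x` and
`G(α, x(α)) = 0` (so all solutions in the box lie on the graph `α ↦ x(α)`). -/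
theorem constructive_implicit_function_theorem
    {P X Y : Type*}
    [NormedAddCommGroup P] [NormedSpace ℝ P] [CompleteSpace P]
    [NormedAddCommGroup X] [NormedSpace ℝ X] [CompleteSpace X]
    [NormedAddCommGroup Y] [NormedSpace ℝ Y] [CompleteSpace Y]
    (G : P × X → Y) (hG : Differentiable ℝ G)
    (αs : P) (xs : X) (ρ K L₁ L₂ L₃ L₄ ℓx ℓα : ℝ)
    (hρ : 0 < ρ) (hK : 0 < K)
    (hL₁ : 0 < L₁) (hL₂ : 0 < L₂) (hL₃ : 0 < L₃) (hL₄ : 0 < L₄)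
    (hℓx : 0 < ℓx) (hℓα : 0 ≤ ℓα)
    (H1 : ‖G (αs, xs)‖ ≤ ρ)
    (H2 : ∃ Ainv : Y →L[ℝ] X,
        Ainv.comp (fderiv ℝ (fun x => G (αs, x)) xs) = ContinuousLinearMap.id ℝ X ∧
        (fderiv ℝ (fun x => G (αs, x)) xs).comp Ainv = ContinuousLinearMap.id ℝ Y ∧
        ‖Ainv‖ ≤ K)
    (H3 : ∀ (α : P) (x : X), ‖x - xs‖ ≤ ℓx → ‖α - αs‖ ≤ ℓα →
        ‖fderiv ℝ (fun x' => G (α, x')) x - fderiv ℝ (fun x' => G (αs, x')) xs‖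
          ≤ L₁ * ‖x - xs‖ + L₂ * ‖α - αs‖)
    (H4 : ∀ α : P, ‖α - αs‖ ≤ ℓα →
        ‖fderiv ℝ (fun α' => G (α', xs)) α‖ ≤ L₃ + L₄ * ‖α - αs‖)
    (hmain1 : 4 * K ^ 2 * ρ * L₁ < 1) (hmain2 : 2 * K * ρ < ℓx) :
    (∃ δα δx : ℝ, 0 ≤ δα ∧ δα ≤ ℓα ∧ 0 < δx ∧ δx ≤ ℓx ∧
        2 * K * L₁ * δx + 2 * K * L₂ * δα ≤ 1 ∧
        2 * K * ρ + 2 * K * L₃ * δα + 2 * K * L₄ * δα ^ 2 ≤ δx) ∧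
    (∀ δα δx : ℝ, 0 ≤ δα → δα ≤ ℓα → 0 < δx → δx ≤ ℓx →
        2 * K * L₁ * δx + 2 * K * L₂ * δα ≤ 1 →
        2 * K * ρ + 2 * K * L₃ * δα + 2 * K * L₄ * δα ^ 2 ≤ δx →
        ∀ α : P, ‖α - αs‖ ≤ δα →
          ∃! x : X, ‖x - xs‖ ≤ δx ∧ G (α, x) = 0) := by
  obtain ⟨Ainv, hAinvA, hAAinv, hAinvK⟩ := H2
  set A := fderiv ℝ (fun x => G (αs, x)) xs with hA
  have hAinvAv : ∀ v : X, Ainv (A v) = v := fun v => DFunLike.congr_fun hAinvA v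
  have hAAinvv : ∀ v : Y, A (Ainv v) = v := fun v => DFunLike.congr_fun hAAinv v
  have hdiffx : ∀ β : P, Differentiable ℝ (fun x => G (β, x)) := fun β =>
    hG.comp ((differentiable_const β).prodMk differentiable_id)
  have hdiffα : Differentiable ℝ (fun β => G (β, xs)) :=
    hG.comp (differentiable_id.prodMk (differentiable_const xs))
  constructor
  · exact ⟨0, 2 * K * ρ, le_refl 0, hℓα, by positivity, hmain2.le, by nlinarith, by nlinarith⟩
  intro δα δx hδα hδαℓ hδx hδxℓ hc1 hc2 α hα
  have hαℓ : ‖α - αs‖ ≤ ℓα := hα.trans hδαℓ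
  -- the Newton-type map and its contraction property
  set T : X → X := fun x => x - Ainv (G (α, x)) with hT
  have key : ∀ x ∈ Metric.closedBall xs δx, ∀ x' ∈ Metric.closedBall xs δx,
      ‖T x - T x'‖ ≤ (1 / 2) * ‖x - x'‖ := by
    intro x hx x' hx'
    set g : X → X := fun z => Ainv (A z - G (α, z)) with hg
    have hgdiff : ∀ z : X, DifferentiableAt ℝ g z := fun z =>
      (Ainv.differentiable.comp (A.differentiable.sub (hdiffx α))) z
    have hgderiv : ∀ z : X, fderiv ℝ g z
        = Ainv.comp (A - fderiv ℝ (fun z' => G (α, z')) z) := by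
      intro z
      have h1 : fderiv ℝ (fun z => A z - G (α, z)) z
          = A - fderiv ℝ (fun z' => G (α, z')) z := by
        rw [fderiv_fun_sub (A.differentiableAt) ((hdiffx α) z), A.fderiv]
      rw [show g = (fun y => Ainv y) ∘ (fun z => A z - G (α, z)) from rfl,
        fderiv_comp z Ainv.differentiableAt (A.differentiableAt.fun_sub ((hdiffx α) z)),
        Ainv.fderiv, h1]
    have hbound : ∀ z ∈ Metric.closedBall xs δx, ‖fderiv ℝ g z‖ ≤ K * (L₁ * δx + L₂ * δα) := by
      intro z hz
      rw [Metric.mem_closedBall, dist_eq_norm] at hz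
      have h3 := H3 α z (hz.trans hδxℓ) hαℓ
      have h4 : ‖A - fderiv ℝ (fun z' => G (α, z')) z‖ ≤ L₁ * δx + L₂ * δα := by
        rw [norm_sub_rev]
        refine h3.trans ?_
        have := norm_nonneg (α - αs)
        nlinarith
      rw [hgderiv z]
      calc ‖Ainv.comp (A - fderiv ℝ (fun z' => G (α, z')) z)‖
          ≤ ‖Ainv‖ * ‖A - fderiv ℝ (fun z' => G (α, z')) z‖ := Ainv.opNorm_comp_le _
        _ ≤ K * (L₁ * δx + L₂ * δα) := by
            have h5 : (0:ℝ) ≤ L₁ * δx + L₂ * δα := by positivity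
            have h6 := norm_nonneg Ainv
            nlinarith
    have hmvt := (convex_closedBall xs δx).norm_image_sub_le_of_norm_fderiv_le
      (f := g) (fun z _ => hgdiff z) hbound hx' hx
    -- T x - T x' = g x - g x'
    have heq : T x - T x' = g x - g x' := by
      simp only [hT, hg, map_sub, hAinvAv]
    rw [heq]
    refine hmvt.trans ?_
    have h7 := norm_nonneg (x - x')
    nlinarith
  -- residual bound at (α, xs)
  have hGαxs : ‖G (α, xs)‖ ≤ ρ + L₃ * δα + L₄ * δα ^ 2 := by
    have hbα : ∀ β ∈ Metric.closedBall αs δα,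
        ‖fderiv ℝ (fun β' => G (β', xs)) β‖ ≤ L₃ + L₄ * δα := by
      intro β hβ
      rw [Metric.mem_closedBall, dist_eq_norm] at hβ
      refine (H4 β (hβ.trans hδαℓ)).trans ?_
      nlinarith
    have hmvt := (convex_closedBall αs δα).norm_image_sub_le_of_norm_fderiv_le
      (f := fun β => G (β, xs)) (fun β _ => hdiffα β) hbα
      (Metric.mem_closedBall_self hδα) (by rwa [Metric.mem_closedBall, dist_eq_norm])
    have h8 : ‖G (α, xs)‖ ≤ ‖G (α, xs) - G (αs, xs)‖ + ‖G (αs, xs)‖ := by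
      calc ‖G (α, xs)‖ = ‖G (α, xs) - G (αs, xs) + G (αs, xs)‖ := by rw [sub_add_cancel]
        _ ≤ _ := norm_add_le _ _
    have h9 : ‖G (α, xs) - G (αs, xs)‖ ≤ (L₃ + L₄ * δα) * ‖α - αs‖ := hmvt
    have h10 : (L₃ + L₄ * δα) * ‖α - αs‖ ≤ (L₃ + L₄ * δα) * δα :=
      mul_le_mul_of_nonneg_left hα (by positivity)
    nlinarith
  -- T maps the closed ball into itself
  have hxsmem : xs ∈ Metric.closedBall xs δx := Metric.mem_closedBall_self hδx.le
  have hmaps : ∀ x ∈ Metric.closedBall xs δx, T x ∈ Metric.closedBall xs δx := by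
    intro x hx
    have h1 := key x hx xs hxsmem
    have h2 : ‖Ainv (G (α, xs))‖ ≤ K * (ρ + L₃ * δα + L₄ * δα ^ 2) := by
      refine (Ainv.le_opNorm _).trans ?_
      have := norm_nonneg Ainv
      nlinarith [norm_nonneg (G (α, xs))]
    have hx' : ‖x - xs‖ ≤ δx := by rwa [Metric.mem_closedBall, dist_eq_norm] at hx
    rw [Metric.mem_closedBall, dist_eq_norm]
    have h3 : ‖T x - xs‖ ≤ ‖T x - T xs‖ + ‖T xs - xs‖ := by
      calc ‖T x - xs‖ = ‖T x - T xs + (T xs - xs)‖ := by abel_nf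
        _ ≤ _ := norm_add_le _ _
    have h4 : ‖T xs - xs‖ = ‖Ainv (G (α, xs))‖ := by
      simp only [hT]
      rw [show xs - Ainv (G (α, xs)) - xs = -(Ainv (G (α, xs))) by abel, norm_neg]
    nlinarith
  -- Banach fixed point on the closed ball
  haveI : CompleteSpace (Metric.closedBall xs δx) :=
    Metric.isClosed_closedBall.completeSpace_coe
  haveI : Nonempty (Metric.closedBall xs δx) := ⟨⟨xs, hxsmem⟩⟩
  set T' : Metric.closedBall xs δx → Metric.closedBall xs δx :=
    fun p => ⟨T p.1, hmaps p.1 p.2⟩ with hT'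
  have hcontr : ContractingWith (1/2 : NNReal) T' := by
    constructor
    · rw [← NNReal.coe_lt_coe]
      norm_num
    · refine LipschitzWith.of_dist_le_mul fun p q => ?_
      have hk := key p.1 p.2 q.1 q.2
      have e1 : dist (T' p) (T' q) = ‖T p.1 - T q.1‖ := by
        rw [Subtype.dist_eq, dist_eq_norm]
      have e2 : dist p q = ‖p.1 - q.1‖ := by
        rw [Subtype.dist_eq, dist_eq_norm]
      rw [e1, e2]
      refine hk.trans (le_of_eq ?_)
      norm_num
  set x₀ := hcontr.fixedPoint T' with hx₀
  have hfix : T' x₀ = x₀ := hcontr.fixedPoint_isFixedPt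
  have hfix1 : T x₀.1 = x₀.1 := congrArg Subtype.val hfix
  have hG0 : G (α, x₀.1) = 0 := by
    have h1 : Ainv (G (α, x₀.1)) = 0 := by
      have h2 : x₀.1 - Ainv (G (α, x₀.1)) = x₀.1 := hfix1
      exact sub_eq_self.mp h2
    have h3 := hAAinvv (G (α, x₀.1))
    rw [h1, map_zero] at h3
    exact h3.symm
  refine ⟨x₀.1, ⟨by
      have := x₀.2
      rwa [Metric.mem_closedBall, dist_eq_norm] at this, hG0⟩, ?_⟩
  intro y ⟨hy1, hy2⟩
  have hymem : y ∈ Metric.closedBall xs δx := by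
    rwa [Metric.mem_closedBall, dist_eq_norm]
  have hTy : T y = y := by simp [hT, hy2]
  have hTx₀ : T x₀.1 = x₀.1 := hfix1
  have := key y hymem x₀.1 x₀.2
  rw [hTy, hTx₀] at this
  have h9 : ‖y - x₀.1‖ = 0 := by nlinarith [norm_nonneg (y - x₀.1)]
  have := norm_eq_zero.mp h9
  exact sub_eq_zero.mp this
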